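/- Let c, κ be positive integers and let R be a real cκ × cκ matrix, with rows and columns indexed by pairs in [c]×[κ], such that: every row of R sums to 0; all off-diagonal entries of R are non-negative; there is a vector μ ∈ ℝ^{cκ} with all entries positive such that diag(μ)·R is symmetric; and R is irreducible, meaning that for any two distinct indices x, y there is a sequence of indices x = z₀, z₁, …, z_m = y with R(z_l, z_{l+1}) > 0 for each l. Then there exist a real diagonal cκ × cκ matrix B = diag(β₁,…,β_{cκ}) with β₁ = 0 and β_k < 0 for all k ≥ 2, and a real cκ × κ matrix K of rank κ, such that for every t ≥ 0, Jᵀ·diag(μ)·exp(Rt)·J = Kᵀ·exp(Bt)·K. -/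

import Mathlib

open Matrix

/-- The matrix `J = 1_cᵀ ⊗ I_κ` hiding class information. -/
def Jmat (c κ : ℕ) : Matrix (Fin c × Fin κ) (Fin κ) ℝ :=
  Matrix.of fun p k => if p.2 = k then 1 else 0

lemma quad_aux {n : Type*} [Fintype n] [DecidableEq n] (M : Matrix n n ℝ)
    (hrow : ∀ x, ∑ y, M x y = 0) (hsa : ∀ a b, M a b = M b a)
    (hoff : ∀ x y, x ≠ y → 0 ≤ M x y) (z : n → ℝ) :
    z ⬝ᵥ M *ᵥ z ≤ 0 ∧ (z ⬝ᵥ M *ᵥ z = 0 → ∀ x y, 0 < M x y → z x = z y) := by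
  have hQ : z ⬝ᵥ M *ᵥ z = ∑ x, ∑ y, z x * (M x y * z y) := by
    simp [dotProduct, mulVec, Finset.mul_sum]
  have hcol : ∀ y, ∑ x, M x y = 0 := fun y => by
    rw [Finset.sum_congr rfl fun x _ => hsa x y]; exact hrow y
  have key : ∑ x, ∑ y, M x y * (z x - z y) ^ 2 = -(2 * (z ⬝ᵥ M *ᵥ z)) := by
    have expand : ∀ x y : n, M x y * (z x - z y) ^ 2
        = M x y * z x ^ 2 + M x y * z y ^ 2 - 2 * (z x * (M x y * z y)) := by
      intros; ring
    simp_rw [expand, Finset.sum_sub_distrib, Finset.sum_add_distrib]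
    have hA : ∑ x : n, ∑ y : n, M x y * z x ^ 2 = 0 := by
      have : ∀ x : n, ∑ y : n, M x y * z x ^ 2 = 0 := fun x => by
        rw [← Finset.sum_mul, hrow, zero_mul]
      simp [this]
    have hB : ∑ x : n, ∑ y : n, M x y * z y ^ 2 = 0 := by
      rw [Finset.sum_comm]
      have : ∀ y : n, ∑ x : n, M x y * z y ^ 2 = 0 := fun y => by
        rw [← Finset.sum_mul, hcol, zero_mul]
      simp [this]
    rw [hA, hB]
    have : ∑ x : n, ∑ y : n, 2 * (z x * (M x y * z y))
        = 2 * ∑ x : n, ∑ y : n, z x * (M x y * z y) := by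
      rw [Finset.mul_sum]
      exact Finset.sum_congr rfl fun x _ => (Finset.mul_sum _ _ _).symm
    rw [this, ← hQ]; ring
  have hterm : ∀ x y : n, 0 ≤ M x y * (z x - z y) ^ 2 := by
    intro x y
    rcases eq_or_ne x y with rfl | h
    · simp
    · exact mul_nonneg (hoff _ _ h) (sq_nonneg _)
  have hsum : 0 ≤ ∑ x : n, ∑ y : n, M x y * (z x - z y) ^ 2 :=
    Finset.sum_nonneg fun x _ => Finset.sum_nonneg fun y _ => hterm x y
  constructor
  · linarith [key ▸ hsum]
  · intro h0 x y hM
    have hzero : ∑ x : n, ∑ y : n, M x y * (z x - z y) ^ 2 = 0 := by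
      rw [key, h0]; ring
    have h1 := (Finset.sum_eq_zero_iff_of_nonneg
      (fun x _ => Finset.sum_nonneg fun y _ => hterm x y)).mp hzero x (Finset.mem_univ x)
    have h2 := (Finset.sum_eq_zero_iff_of_nonneg (fun y _ => hterm x y)).mp h1 y (Finset.mem_univ y)
    have h3 : (z x - z y) ^ 2 = 0 := by
      rcases mul_eq_zero.mp h2 with h | h
      · exact absurd h (ne_of_gt hM)
      · exact h
    have := sq_eq_zero_iff.mp h3
    linarith

lemma exp_smul_diagonal {n : Type*} [Fintype n] [DecidableEq n] (t : ℝ) (γ : n → ℝ) :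
    NormedSpace.exp (t • Matrix.diagonal γ)
      = Matrix.diagonal (fun i => NormedSpace.exp (t * γ i)) := by
  rw [← Matrix.diagonal_smul, Matrix.exp_diagonal]
  have h : NormedSpace.exp (t • γ) = fun i => NormedSpace.exp (t * γ i) := by
    funext i
    rw [Pi.coe_exp, Pi.smul_apply, smul_eq_mul]
  rw [h]

/-- Spectral decomposition of a reversible irreducible rate matrix. -/
lemma spectral_aux {n : Type*} [Fintype n] [DecidableEq n] [Nonempty n]
    (R : Matrix n n ℝ)
    (hrows : ∀ x, ∑ y, R x y = 0)
    (hoffdiag : ∀ x y, x ≠ y → 0 ≤ R x y)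
    (μ : n → ℝ) (hμ : ∀ x, 0 < μ x)
    (hsym : (Matrix.diagonal μ * R).IsSymm)
    (hirr : ∀ x y : n, x ≠ y → Relation.TransGen (fun a b => 0 < R a b) x y) :
    ∃ (i₀ : n) (β₀ : n → ℝ) (V : Matrix n n ℝ),
      β₀ i₀ = 0 ∧ (∀ i, i ≠ i₀ → β₀ i < 0) ∧ IsUnit V.det ∧
      ∀ t : ℝ, Matrix.diagonal μ * NormedSpace.exp (t • R)
        = Vᵀ * Matrix.diagonal (fun i => NormedSpace.exp (t * β₀ i)) * V := by
  classical
  have x₀ : n := Classical.arbitrary n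
  set d : n → ℝ := fun x => Real.sqrt (μ x) with hd_def
  have hd : ∀ x, 0 < d x := fun x => Real.sqrt_pos.mpr (hμ x)
  have hdd : ∀ x, d x * d x = μ x := fun x => Real.mul_self_sqrt (hμ x).le
  set D : Matrix n n ℝ := diagonal d with hD_def
  set Dinv : Matrix n n ℝ := diagonal (fun x => (d x)⁻¹) with hDinv_def
  have hDDinv : D * Dinv = 1 := by
    have h1 : (fun x => d x * (d x)⁻¹) = fun _ : n => (1 : ℝ) :=
      funext fun x => mul_inv_cancel₀ (hd x).ne'
    rw [hD_def, hDinv_def, diagonal_mul_diagonal, h1, diagonal_one]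
  have hDinvD : Dinv * D = 1 := by
    have h1 : (fun x => (d x)⁻¹ * d x) = fun _ : n => (1 : ℝ) :=
      funext fun x => inv_mul_cancel₀ (hd x).ne'
    rw [hD_def, hDinv_def, diagonal_mul_diagonal, h1, diagonal_one]
  have hμD : Matrix.diagonal μ = D * D := by
    rw [hD_def, diagonal_mul_diagonal]
    exact congrArg _ (funext fun x => (hdd x).symm)
  have hsa : ∀ a b : n, (Matrix.diagonal μ * R) a b = (Matrix.diagonal μ * R) b a := by
    intro a b
    have := congrFun (congrFun hsym.eq b) a
    rw [Matrix.transpose_apply] at this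
    exact this
  have hM : ∀ a b : n, (Matrix.diagonal μ * R) a b = μ a * R a b := by
    intro a b; rw [Matrix.diagonal_mul]
  have hMrow : ∀ x : n, ∑ y, (Matrix.diagonal μ * R) x y = 0 := by
    intro x
    simp_rw [hM]
    rw [← Finset.mul_sum, hrows, mul_zero]
  have hMoff : ∀ x y : n, x ≠ y → 0 ≤ (Matrix.diagonal μ * R) x y := by
    intro x y h; rw [hM]; exact mul_nonneg (hμ x).le (hoffdiag x y h)
  set S : Matrix n n ℝ := D * R * Dinv with hS_def
  have hSab : ∀ a b : n, S a b = d a * R a b * (d b)⁻¹ := by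
    intro a b
    rw [hS_def, hD_def, hDinv_def, Matrix.mul_diagonal, Matrix.diagonal_mul]
  have hS : S.IsHermitian := by
    rw [Matrix.IsHermitian, conjTranspose_eq_transpose_of_trivial]
    ext a b
    rw [Matrix.transpose_apply, hSab, hSab]
    have hmu : μ b * R b a = μ a * R a b := by
      have := hsa b a; rwa [hM, hM] at this
    have h1 : d b * d b * R b a = d a * d a * R a b := by
      rw [hdd, hdd]; exact hmu
    field_simp [(hd a).ne', (hd b).ne']
    linear_combination h1
  set U : Matrix n n ℝ := (hS.eigenvectorUnitary : Matrix n n ℝ) with hU_def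
  set β₀ : n → ℝ := hS.eigenvalues with hβ₀_def
  have hU1 : U * star U = 1 := (Matrix.mem_unitaryGroup_iff).mp hS.eigenvectorUnitary.2
  have hU2 : star U * U = 1 := (Matrix.mem_unitaryGroup_iff').mp hS.eigenvectorUnitary.2
  have spec : S = U * diagonal β₀ * star U := by
    have := hS.spectral_theorem
    rwa [RCLike.ofReal_real_eq_id, Function.id_comp] at this
  have hQrel : ∀ v : n → ℝ, v ⬝ᵥ S *ᵥ v
      = (fun x => (d x)⁻¹ * v x) ⬝ᵥ (Matrix.diagonal μ * R) *ᵥ (fun x => (d x)⁻¹ * v x) := by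
    intro v
    simp only [dotProduct, mulVec, Finset.mul_sum]
    refine Finset.sum_congr rfl fun x _ => Finset.sum_congr rfl fun y _ => ?_
    rw [hSab, hM, ← hdd x]
    field_simp [(hd x).ne', (hd y).ne']
  have hinner : ∀ f g : EuclideanSpace ℝ n, (inner ℝ f g : ℝ) = ⇑f ⬝ᵥ ⇑g := by
    intro f g
    simp [PiLp.inner_apply, dotProduct, RCLike.inner_apply, mul_comm]
  have hON := hS.eigenvectorBasis.orthonormal
  set v : n → n → ℝ := fun i x => hS.eigenvectorBasis i x with hv_def
  have hvS : ∀ i : n, S *ᵥ v i = β₀ i • v i := fun i => hS.mulVec_eigenvectorBasis i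
  have hvv : ∀ i : n, v i ⬝ᵥ v i = 1 := by
    intro i
    have h := (orthonormal_iff_ite.mp hON) i i
    rw [if_pos rfl] at h
    exact (hinner _ _).symm.trans h
  have hQeig : ∀ i : n, v i ⬝ᵥ S *ᵥ v i = β₀ i := by
    intro i
    rw [hvS i, dotProduct_smul, smul_eq_mul, hvv, mul_one]
  have hβle : ∀ i : n, β₀ i ≤ 0 := by
    intro i
    have hq := (quad_aux (Matrix.diagonal μ * R) hMrow hsa hMoff
      (fun x => (d x)⁻¹ * v i x)).1
    rw [← hQrel, hQeig] at hq
    exact hq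
  have heigvec : ∀ i : n, β₀ i = 0 → ∀ x : n,
      v i x = d x * ((d x₀)⁻¹ * v i x₀) := by
    intro i hi x
    set z : n → ℝ := fun x => (d x)⁻¹ * v i x with hz_def
    have hQ0 : z ⬝ᵥ (Matrix.diagonal μ * R) *ᵥ z = 0 := by
      have h := hQeig i
      rw [hQrel] at h
      rw [← hz_def] at h
      rw [h, hi]
    have hstep : ∀ a b : n, 0 < R a b → z a = z b := by
      intro a b hab
      rcases eq_or_ne a b with rfl | hne
      · rfl
      · exact (quad_aux (Matrix.diagonal μ * R) hMrow hsa hMoff z).2 hQ0 a b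
          (by rw [hM]; exact mul_pos (hμ a) hab)
    have htrans : ∀ p q : n, Relation.TransGen (fun a b => 0 < R a b) p q → z p = z q := by
      intro p q h
      induction h with
      | single h' => exact hstep _ _ h'
      | tail _ h' ih => exact ih.trans (hstep _ _ h')
    have hzx : z x = z x₀ := by
      rcases eq_or_ne x x₀ with h | h
      · rw [h]
      · exact htrans x x₀ (hirr x x₀ h)
    have hvx : v i x = d x * z x := by
      rw [hz_def, ← mul_assoc, mul_inv_cancel₀ (hd x).ne', one_mul]
    rw [hvx, hzx, hz_def]
  have hSd : S *ᵥ d = 0 := by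
    have h1 : Dinv *ᵥ d = fun _ => 1 := by
      funext x
      rw [hDinv_def, mulVec_diagonal]
      exact inv_mul_cancel₀ (hd x).ne'
    have h2 : R *ᵥ (fun _ : n => 1) = 0 := by
      funext x
      simpa [mulVec, dotProduct] using hrows x
    rw [hS_def, ← Matrix.mulVec_mulVec, ← Matrix.mulVec_mulVec, h1, h2, Matrix.mulVec_zero]
  have hdetS : S.det = ∏ i, β₀ i := by
    rw [spec, Matrix.det_mul, Matrix.det_mul, mul_right_comm, ← Matrix.det_mul, hU1,
      Matrix.det_one, one_mul, Matrix.det_diagonal]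
  have hex : ∃ i : n, β₀ i = 0 := by
    by_contra h
    push_neg at h
    have hdet : IsUnit S.det := by
      rw [hdetS]
      exact isUnit_iff_ne_zero.mpr (Finset.prod_ne_zero_iff.mpr fun i _ => h i)
    have hd0 : d = 0 := by
      calc d = (S⁻¹ * S) *ᵥ d := by rw [Matrix.nonsing_inv_mul S hdet, Matrix.one_mulVec]
      _ = S⁻¹ *ᵥ (S *ᵥ d) := (Matrix.mulVec_mulVec _ _ _).symm
      _ = 0 := by rw [hSd, Matrix.mulVec_zero]
    have := congrFun hd0 x₀
    simp only [Pi.zero_apply] at this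
    exact absurd this (hd x₀).ne'
  have huniq : ∀ i j : n, β₀ i = 0 → β₀ j = 0 → i = j := by
    intro i j hi hj
    by_contra hij
    set a : ℝ := (d x₀)⁻¹ * v i x₀ with ha_def
    set b : ℝ := (d x₀)⁻¹ * v j x₀ with hb_def
    have hvi := heigvec i hi
    have hvj := heigvec j hj
    have horth : v i ⬝ᵥ v j = 0 := by
      have h := (orthonormal_iff_ite.mp hON) i j
      rw [if_neg hij] at h
      exact (hinner _ _).symm.trans h
    have hdot : v i ⬝ᵥ v j = a * b * ∑ x, μ x := by
      simp only [dotProduct]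
      rw [Finset.mul_sum]
      refine Finset.sum_congr rfl fun x _ => ?_
      rw [hvi x, hvj x, ← hdd x]
      ring
    have ha : a ≠ 0 := by
      intro h0
      have hvz : ∀ x, v i x = 0 := fun x => by rw [hvi x, ← ha_def, h0, mul_zero]
      have h := hvv i
      simp [dotProduct, hvz] at h
    have hb : b ≠ 0 := by
      intro h0
      have hvz : ∀ x, v j x = 0 := fun x => by rw [hvj x, ← hb_def, h0, mul_zero]
      have h := hvv j
      simp [dotProduct, hvz] at h
    have hsum : 0 < ∑ x, μ x :=
      Finset.sum_pos (fun x _ => hμ x) ⟨x₀, Finset.mem_univ x₀⟩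
    rw [hdot] at horth
    exact (mul_ne_zero (mul_ne_zero ha hb) hsum.ne') horth
  obtain ⟨i₀, hi₀⟩ := hex
  refine ⟨i₀, β₀, star U * D, hi₀,
    fun i hne => lt_of_le_of_ne (hβle i) (fun h0 => hne (huniq i i₀ h0 hi₀)), ?_, ?_⟩
  · have hUdet : IsUnit (star U).det := by
      refine IsUnit.of_mul_eq_one U.det ?_
      rw [← Matrix.det_mul, hU2, Matrix.det_one]
    have hDdet : IsUnit D.det := by
      rw [hD_def, Matrix.det_diagonal]
      exact isUnit_iff_ne_zero.mpr (Finset.prod_ne_zero_iff.mpr fun x _ => (hd x).ne')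
    rw [Matrix.det_mul]
    exact hUdet.mul hDdet
  · intro t
    set DUnit : (Matrix n n ℝ)ˣ := ⟨Dinv, D, hDinvD, hDDinv⟩ with hDU_def
    set UUnit : (Matrix n n ℝ)ˣ := ⟨U, star U, hU1, hU2⟩ with hUU_def
    have hR : t • R = Dinv * (t • S) * D := by
      have hRS : Dinv * S * D = R := by
        rw [hS_def,
          show Dinv * (D * R * Dinv) * D = (Dinv * D) * (R * (Dinv * D)) from by
            simp only [Matrix.mul_assoc],
          hDinvD, Matrix.one_mul, Matrix.mul_one]
      rw [mul_smul_comm, smul_mul_assoc, hRS]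
    have hexpS : NormedSpace.exp (t • S)
        = U * diagonal (fun i => NormedSpace.exp (t * β₀ i)) * star U := by
      have hS' : t • S = U * (t • diagonal β₀) * star U := by
        rw [spec, mul_smul_comm, smul_mul_assoc]
      rw [hS', show star U = ((UUnit⁻¹ : (Matrix n n ℝ)ˣ) : Matrix n n ℝ) from rfl,
        show U = ((UUnit : (Matrix n n ℝ)ˣ) : Matrix n n ℝ) from rfl,
        Matrix.exp_units_conj UUnit (t • diagonal β₀)]
      rw [show ((UUnit : (Matrix n n ℝ)ˣ) : Matrix n n ℝ) = U from rfl,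
        show ((UUnit⁻¹ : (Matrix n n ℝ)ˣ) : Matrix n n ℝ) = star U from rfl,
        exp_smul_diagonal]
    have hexpR : NormedSpace.exp (t • R)
        = Dinv * (U * diagonal (fun i => NormedSpace.exp (t * β₀ i)) * star U) * D := by
      rw [hR, show Dinv = ((DUnit : (Matrix n n ℝ)ˣ) : Matrix n n ℝ) from rfl,
        show D = ((DUnit⁻¹ : (Matrix n n ℝ)ˣ) : Matrix n n ℝ) from rfl,
        Matrix.exp_units_conj DUnit (t • S)]
      rw [show ((DUnit : (Matrix n n ℝ)ˣ) : Matrix n n ℝ) = Dinv from rfl,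
        show ((DUnit⁻¹ : (Matrix n n ℝ)ˣ) : Matrix n n ℝ) = D from rfl, hexpS]
    have hsUT : (star U)ᵀ = U := by
      rw [Matrix.star_eq_conjTranspose, conjTranspose_eq_transpose_of_trivial,
        Matrix.transpose_transpose]
    rw [hexpR, hμD, Matrix.transpose_mul, hsUT, hD_def, Matrix.diagonal_transpose, ← hD_def]
    rw [show D * D * (Dinv * (U * diagonal (fun i => NormedSpace.exp (t * β₀ i)) * star U) * D)
        = D * (D * Dinv) * (U * (diagonal (fun i => NormedSpace.exp (t * β₀ i)) * (star U * D)))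
        from by simp only [Matrix.mul_assoc], hDDinv, Matrix.mul_one]
    simp only [Matrix.mul_assoc]


/-- The two-taxon distributions of a reversible irreducible covarion-type rate
matrix have the form `Kᵀ·exp(Bt)·K` with `B` diagonal having one zero and
otherwise negative entries, and `K` of rank `κ`. -/
theorem two_taxon_form {c κ : ℕ} (hc : 0 < c) (hκ : 0 < κ) (hcκ : 0 < c * κ)
    (R : Matrix (Fin c × Fin κ) (Fin c × Fin κ) ℝ)
    (hrows : ∀ x, ∑ y, R x y = 0)
    (hoffdiag : ∀ x y, x ≠ y → 0 ≤ R x y)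
    (μ : Fin c × Fin κ → ℝ) (hμ : ∀ x, 0 < μ x)
    (hsym : (Matrix.diagonal μ * R).IsSymm)
    (hirr : ∀ x y : Fin c × Fin κ, x ≠ y →
      Relation.TransGen (fun a b => 0 < R a b) x y) :
    ∃ (β : Fin (c * κ) → ℝ) (K : Matrix (Fin (c * κ)) (Fin κ) ℝ),
      β ⟨0, hcκ⟩ = 0 ∧ (∀ k : Fin (c * κ), (k : ℕ) ≠ 0 → β k < 0) ∧
      K.rank = κ ∧
      ∀ t : ℝ, 0 ≤ t →
        (Jmat c κ)ᵀ * Matrix.diagonal μ * NormedSpace.exp (t • R) * Jmat c κ =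
          Kᵀ * NormedSpace.exp (t • Matrix.diagonal β) * K := by
  classical
  have : Nonempty (Fin c × Fin κ) := ⟨(⟨0, hc⟩, ⟨0, hκ⟩)⟩
  obtain ⟨i₀, β₀, V, hi₀, hneg, hVdet, hform⟩ :=
    spectral_aux R hrows hoffdiag μ hμ hsym hirr
  set z0 : Fin (c * κ) := ⟨0, hcκ⟩ with hz0_def
  set e' : (Fin c × Fin κ) ≃ Fin (c * κ) :=
    finProdFinEquiv.trans (Equiv.swap (finProdFinEquiv i₀) z0) with he'_def
  have he'i₀ : e' i₀ = z0 := by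
    simp [he'_def, Equiv.swap_apply_left]
  set β : Fin (c * κ) → ℝ := fun k => β₀ (e'.symm k) with hβ_def
  set K₀ : Matrix (Fin c × Fin κ) (Fin κ) ℝ := V * Jmat c κ with hK₀_def
  set K : Matrix (Fin (c * κ)) (Fin κ) ℝ := K₀.submatrix ⇑e'.symm _root_.id with hK_def
  refine ⟨β, K, ?_, ?_, ?_, ?_⟩
  · show β₀ (e'.symm z0) = 0
    rw [← he'i₀, Equiv.symm_apply_apply]
    exact hi₀
  · intro k hk
    have hkz : k ≠ z0 := fun h => hk (by rw [h])
    have hne : e'.symm k ≠ i₀ := by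
      intro h
      apply hkz
      rw [← he'i₀, ← h, Equiv.apply_symm_apply]
    exact hneg _ hne
  · have hKK : Kᵀ * K = K₀ᵀ * K₀ := by
      rw [hK_def, transpose_submatrix,
        Matrix.submatrix_mul_equiv K₀ᵀ K₀ _root_.id e'.symm _root_.id, Matrix.submatrix_id_id]
    have h1 : K.rank = K₀.rank := by
      rw [← Matrix.rank_transpose_mul_self K, hKK, Matrix.rank_transpose_mul_self K₀]
    have h2 : K₀.rank = (Jmat c κ).rank := by
      rw [hK₀_def, Matrix.rank_mul_eq_right_of_isUnit_det V _ hVdet]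
    have hJJ : (Jmat c κ)ᵀ * Jmat c κ = diagonal (fun _ : Fin κ => (c : ℝ)) := by
      ext k l
      simp only [Matrix.mul_apply, Matrix.transpose_apply, Jmat, Matrix.of_apply,
        Matrix.diagonal]
      rw [Fintype.sum_prod_type]
      simp [Finset.sum_ite_eq, eq_comm]
    have h3 : (Jmat c κ).rank = κ := by
      rw [← Matrix.rank_transpose_mul_self, hJJ, Matrix.rank_diagonal]
      have hc0 : (c : ℝ) ≠ 0 := Nat.cast_ne_zero.mpr hc.ne'
      simp only [ne_eq, hc0, not_false_eq_true]
      rw [Fintype.card_subtype]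
      simp
    rw [h1, h2, h3]
  · intro t _
    have hform' := hform t
    have hRHS : Kᵀ * NormedSpace.exp (t • Matrix.diagonal β) * K
        = K₀ᵀ * diagonal (fun i => NormedSpace.exp (t * β₀ i)) * K₀ := by
      rw [exp_smul_diagonal, hK_def, transpose_submatrix]
      have hdiag : (diagonal fun k => NormedSpace.exp (t * β k))
          = (diagonal (fun i => NormedSpace.exp (t * β₀ i))).submatrix ⇑e'.symm ⇑e'.symm := by
        rw [Matrix.submatrix_diagonal_equiv]
        rfl
      rw [hdiag,
        Matrix.submatrix_mul_equiv K₀ᵀ _ _root_.id e'.symm ⇑e'.symm,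
        Matrix.submatrix_mul_equiv _ K₀ _root_.id e'.symm _root_.id,
        Matrix.submatrix_id_id]
    rw [hRHS, hK₀_def, Matrix.transpose_mul]
    rw [show (Jmat c κ)ᵀ * Vᵀ * (diagonal (fun i => NormedSpace.exp (t * β₀ i))) * (V * Jmat c κ)
        = (Jmat c κ)ᵀ * (Vᵀ * diagonal (fun i => NormedSpace.exp (t * β₀ i)) * V) * Jmat c κ
        from by simp only [Matrix.mul_assoc], ← hform']
    simp only [Matrix.mul_assoc]
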